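/- Define integers b_j := 1 if j is even with 0 ≤ j ≤ 18 and b_j := 0 otherwise (the Betti numbers of ℙ⁹), and B_j := #{(a,c) ∈ ℤ² : 0 ≤ a ≤ 2, 0 ≤ c ≤ 8, 2a + 2c = j} (the Betti numbers of ℙ² × ℙ⁸). Define n^{0,j} := b_j, n^{2,j} := b_j, and n^{1,j} := B_{1+j} − b_{1+j} − b_{j−1} for all integers j ≥ 0. Then n^{1,j} ≥ 0 for all j, and Σ_{i=0}^{2} Σ_{j≥0} n^{i,j} q^i t^j = (1+q²)·(1 + t² + t⁴ + ··· + t^{18}) + q·(t³ + t⁵ + t⁷ + t⁹ + t¹¹ + t¹³ + t¹⁵), which is the combinatorial refined BPS polynomial F̃_{3,BPS}(q,t) of degree 3 for local ℙ². (This is the decomposition-theorem computation of the refined BPS invariants n_3^{i,j} of the elliptic fibration h : M_{3,χ} → ℙ⁹.) -/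
import Mathlib


open scoped BigOperators

noncomputable section

/-- the Betti numbers of `ℙ⁹`: `b_j = 1` if `j` is even with `0 ≤ j ≤ 18`, else `0`
(defined on `ℤ`) -/
def bP9 (j : ℤ) : ℤ := if 0 ≤ j ∧ j ≤ 18 ∧ 2 ∣ j then 1 else 0

/-- the Betti numbers of `ℙ² × ℙ⁸`:
`B_j = #{(a,c) : 0 ≤ a ≤ 2, 0 ≤ c ≤ 8, 2a + 2c = j}` -/
def bP2P8 (j : ℤ) : ℤ :=
  (((Finset.range 3) ×ˢ (Finset.range 9)).filter
    fun p => 2 * (p.1 : ℤ) + 2 * (p.2 : ℤ) = j).card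

/-- the refined BPS invariants `n^{i,j}` of local `ℙ²` in degree 3, computed from the
decomposition theorem for the elliptic fibration `h : M_{3,χ} → ℙ⁹`:
`n^{0,j} = b_j`, `n^{2,j} = b_j`, `n^{1,j} = B_{1+j} - b_{1+j} - b_{j-1}` -/
def n3 (i j : ℕ) : ℤ :=
  if i = 0 ∨ i = 2 then bP9 j
  else if i = 1 then bP2P8 (1 + j) - bP9 (1 + j) - bP9 ((j : ℤ) - 1)
  else 0

open MvPolynomial in
/-- the combinatorial refined BPS polynomial
`F̃_{3,BPS}(q,t) = (1+q²)·(1 + t² + ⋯ + t¹⁸) + q·(t³ + t⁵ + ⋯ + t¹⁵)` -/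
def F3BPS : MvPolynomial (Fin 2) ℤ :=
  (1 + X 0 ^ 2) * (∑ c ∈ Finset.range 10, X 1 ^ (2 * c))
    + X 0 * (∑ c ∈ Finset.range 7, X 1 ^ (2 * c + 3))

lemma single_eq_iff (a b i j : ℕ) :
    Finsupp.single (0 : Fin 2) a + Finsupp.single 1 b
      = Finsupp.single 0 i + Finsupp.single 1 j ↔ a = i ∧ b = j := by
  constructor
  · intro h
    have h0 := DFunLike.congr_fun h 0
    have h1 := DFunLike.congr_fun h 1
    simp [Finsupp.single_apply] at h0 h1
    exact ⟨h0, h1⟩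
  · rintro ⟨rfl, rfl⟩; rfl

open MvPolynomial in
lemma coeff_mono (a b i j : ℕ) :
    coeff (Finsupp.single 0 i + Finsupp.single 1 j)
      ((X 0 : MvPolynomial (Fin 2) ℤ) ^ a * X 1 ^ b)
      = if a = i ∧ b = j then 1 else 0 := by
  rw [X_pow_eq_monomial, X_pow_eq_monomial, monomial_mul, one_mul, coeff_monomial]
  simp [single_eq_iff]

lemma sum1 (j : ℕ) :
    (∑ c ∈ Finset.range 10, if 2 * c = j then (1 : ℤ) else 0)
      = if j % 2 = 0 ∧ j ≤ 18 then 1 else 0 := by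
  by_cases h : j % 2 = 0 ∧ j ≤ 18
  · rw [if_pos h, Finset.sum_eq_single (j / 2)]
    · rw [if_pos (by omega)]
    · intro c _ hc; rw [if_neg (by omega)]
    · intro hmem; exact absurd (Finset.mem_range.mpr (by omega)) hmem
  · rw [if_neg h, Finset.sum_eq_zero]
    intro c hc
    rw [Finset.mem_range] at hc
    rw [if_neg (by omega)]

lemma sum3 (j : ℕ) :
    (∑ c ∈ Finset.range 7, if 2 * c + 3 = j then (1 : ℤ) else 0)
      = if j % 2 = 1 ∧ 3 ≤ j ∧ j ≤ 15 then 1 else 0 := by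
  by_cases h : j % 2 = 1 ∧ 3 ≤ j ∧ j ≤ 15
  · rw [if_pos h, Finset.sum_eq_single ((j - 3) / 2)]
    · rw [if_pos (by omega)]
    · intro c _ hc; rw [if_neg (by omega)]
    · intro hmem; exact absurd (Finset.mem_range.mpr (by omega)) hmem
  · rw [if_neg h, Finset.sum_eq_zero]
    intro c hc
    rw [Finset.mem_range] at hc
    rw [if_neg (by omega)]

open MvPolynomial in
lemma coeff_F3BPS (i j : ℕ) :
    MvPolynomial.coeff (Finsupp.single 0 i + Finsupp.single 1 j) F3BPS
      = (if i = 0 ∧ j % 2 = 0 ∧ j ≤ 18 then 1 else 0)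
        + (if i = 2 ∧ j % 2 = 0 ∧ j ≤ 18 then 1 else 0)
        + (if i = 1 ∧ j % 2 = 1 ∧ 3 ≤ j ∧ j ≤ 15 then 1 else 0) := by
  have hF : F3BPS = (∑ c ∈ Finset.range 10, X 0 ^ 0 * X 1 ^ (2 * c))
      + (∑ c ∈ Finset.range 10, X 0 ^ 2 * X 1 ^ (2 * c))
      + (∑ c ∈ Finset.range 7, X 0 ^ 1 * X 1 ^ (2 * c + 3)) := by
    simp only [F3BPS, pow_zero, pow_one, one_mul, add_mul, Finset.mul_sum, Finset.sum_add_distrib]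
  rw [hF]
  simp only [coeff_add, coeff_sum, coeff_mono]
  by_cases h0 : i = 0
  · subst h0
    simp only [show ¬ ((2 : ℕ) = 0) by omega, show ¬ ((1 : ℕ) = 0) by omega,
      eq_self_iff_true, false_and, if_false, Finset.sum_const_zero, add_zero, true_and]
    rw [sum1]
    simp
  · by_cases h2 : i = 2
    · subst h2
      simp only [show ¬ ((0 : ℕ) = 2) by omega, show ¬ ((1 : ℕ) = 2) by omega,
        eq_self_iff_true, false_and, if_false, Finset.sum_const_zero, zero_add, add_zero, true_and]
      rw [sum1]
      simp
    · by_cases h1 : i = 1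
      · subst h1
        simp only [show ¬ ((0 : ℕ) = 1) by omega, show ¬ ((2 : ℕ) = 1) by omega,
          eq_self_iff_true, false_and, if_false, Finset.sum_const_zero, zero_add, true_and]
        rw [sum3]
        simp
      · simp only [show ¬ ((0 : ℕ) = i) from fun h => h0 h.symm,
          show ¬ ((2 : ℕ) = i) from fun h => h2 h.symm,
          show ¬ ((1 : ℕ) = i) from fun h => h1 h.symm,
          h0, h1, h2, false_and, if_false, Finset.sum_const_zero, add_zero]

lemma n3_even (i j : ℕ) (h : i = 0 ∨ i = 2) :
    n3 i j = if j % 2 = 0 ∧ j ≤ 18 then 1 else 0 := by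
  rw [n3, if_pos h, bP9]
  split_ifs with ha hb hb <;> first | rfl | (exfalso; omega)

lemma n3_one (j : ℕ) :
    n3 1 j = if j % 2 = 1 ∧ 3 ≤ j ∧ j ≤ 15 then 1 else 0 := by
  rcases le_or_gt j 20 with h | h
  · interval_cases j <;> decide
  · have hB : bP2P8 (1 + (j : ℤ)) = 0 := by
      rw [bP2P8, Nat.cast_eq_zero, Finset.card_eq_zero, Finset.filter_eq_empty_iff]
      intro p hp
      rw [Finset.mem_product, Finset.mem_range, Finset.mem_range] at hp
      omega
    have hb1 : bP9 (1 + (j : ℤ)) = 0 := by rw [bP9, if_neg (by omega)]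
    have hb2 : bP9 ((j : ℤ) - 1) = 0 := by rw [bP9, if_neg (by omega)]
    rw [n3]
    norm_num [hB, hb1, hb2]
    omega

theorem degree_three_BPS_from_decomposition :
    (∀ j : ℕ, 0 ≤ n3 1 j) ∧
      (∀ i j : ℕ,
        (if i ≤ 2 then n3 i j else 0)
          = MvPolynomial.coeff (Finsupp.single 0 i + Finsupp.single 1 j) F3BPS) := by
  constructor
  · intro j
    rw [n3_one]
    split_ifs <;> norm_num
  · intro i j
    rw [coeff_F3BPS]
    by_cases h : i ≤ 2
    · rw [if_pos h]
      interval_cases i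
      · rw [n3_even 0 j (Or.inl rfl)]; split_ifs <;> first | omega | simp_all
      · rw [n3_one]; split_ifs <;> first | omega | simp_all
      · rw [n3_even 2 j (Or.inr rfl)]; split_ifs <;> first | omega | simp_all
    · rw [if_neg h]
      split_ifs <;> omega
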